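/- arXiv:1002.2597 — 3 statements merged into one kernel-verified Lean document; each statement's English description precedes it below -/
import Mathlib

section
/- Let p be an odd prime, τ an integer not divisible by p, and k ≥ 2. If the multiplicative order of τ modulo p^{k+1} equals the multiplicative order of τ modulo p^k, then the multiplicative order of τ modulo p^k equals the multiplicative order of τ modulo p^{k−1}. -/
lemma pow_cast_eq_one_iff' (n : ℕ) (τ : ℤ) (e : ℕ) :
    (τ : ZMod n) ^ e = 1 ↔ (n : ℤ) ∣ τ ^ e - 1 := by
  rw [← Int.cast_pow, ← Int.cast_one, ZMod.intCast_eq_intCast_iff, Int.modEq_iff_dvd,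
    dvd_sub_comm]

lemma ord_dvd_of_le' (p : ℕ) (τ : ℤ) {a b : ℕ} (hab : a ≤ b) :
    orderOf (τ : ZMod (p ^ a)) ∣ orderOf (τ : ZMod (p ^ b)) := by
  rw [orderOf_dvd_iff_pow_eq_one, pow_cast_eq_one_iff']
  have h1 := (pow_cast_eq_one_iff' (p ^ b) τ (orderOf (τ : ZMod (p ^ b)))).1
    (pow_orderOf_eq_one _)
  refine dvd_trans ?_ h1
  push_cast
  exact pow_dvd_pow _ hab

lemma step_B' (p : ℕ) (τ : ℤ) (j e : ℕ) (hj : 1 ≤ j)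
    (hd : (p : ℤ) ^ j ∣ τ ^ e - 1) : (p : ℤ) ^ (j + 1) ∣ τ ^ (e * p) - 1 := by
  have key : ((τ ^ e) ^ p - 1 ^ p : ℤ)
      = (∑ i ∈ Finset.range p, (τ ^ e) ^ i * (1 : ℤ) ^ (p - 1 - i)) * (τ ^ e - 1) := by
    rw [geom_sum₂_mul]
  have hp1 : (p : ℤ) ∣ τ ^ e - 1 := dvd_trans (dvd_pow_self _ (by omega)) hd
  have hgeom : (p : ℤ) ∣ ∑ i ∈ Finset.range p, (τ ^ e) ^ i * (1 : ℤ) ^ (p - 1 - i) := by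
    refine dvd_geom_sum₂_self ?_
    simpa using hp1
  calc (p : ℤ) ^ (j + 1) = (p : ℤ) * (p : ℤ) ^ j := by ring
    _ ∣ (∑ i ∈ Finset.range p, (τ ^ e) ^ i * (1 : ℤ) ^ (p - 1 - i)) * (τ ^ e - 1) :=
        mul_dvd_mul hgeom hd
    _ = τ ^ (e * p) - 1 := by rw [← key]; rw [← pow_mul, one_pow]


/-- Key lemma (Lercier's Corollary 4): for an odd prime `p` and `τ` coprime to `p`,
if the multiplicative order of `τ` modulo `p^(k+1)` equals that modulo `p^k` (for `k ≥ 2`),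
then the order modulo `p^k` equals the order modulo `p^(k-1)`. -/
theorem multiplicative_order_stabilizes (p : ℕ) (hp : p.Prime) (hodd : p ≠ 2)
    (τ : ℤ) (hτ : ¬ (p : ℤ) ∣ τ) (k : ℕ) (hk : 2 ≤ k)
    (h : orderOf (τ : ZMod (p ^ (k + 1))) = orderOf (τ : ZMod (p ^ k))) :
    orderOf (τ : ZMod (p ^ k)) = orderOf (τ : ZMod (p ^ (k - 1))) := by
  set d := orderOf (τ : ZMod (p ^ (k - 1))) with hd
  set m := orderOf (τ : ZMod (p ^ k)) with hm
  have hdm : d ∣ m := ord_dvd_of_le' p τ (Nat.sub_le k 1)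
  by_contra hne
  -- p^(k-1) ∣ τ^d - 1
  have hd1 : (p : ℤ) ^ (k - 1) ∣ τ ^ d - 1 := by
    have := (pow_cast_eq_one_iff' (p ^ (k - 1)) τ d).1 (pow_orderOf_eq_one _)
    push_cast at this; exact this
  -- ¬ p^k ∣ τ^d - 1
  have hd2 : ¬ (p : ℤ) ^ k ∣ τ ^ d - 1 := by
    intro hdvd
    apply hne
    apply Nat.dvd_antisymm _ hdm
    rw [hm, orderOf_dvd_iff_pow_eq_one, pow_cast_eq_one_iff']
    push_cast
    exact hdvd
  -- m ∣ d * p, hence orderOf mod p^(k+1) divides d*p too (by h)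
  have hmdp : m ∣ d * p := by
    rw [hm, orderOf_dvd_iff_pow_eq_one, pow_cast_eq_one_iff']
    have := step_B' p τ (k - 1) d (by omega) hd1
    rw [show k - 1 + 1 = k by omega] at this
    push_cast
    exact this
  -- hence p^(k+1) ∣ τ^(d*p) - 1
  have hbig : (p : ℤ) ^ (k + 1) ∣ τ ^ (d * p) - 1 := by
    have hMdp : orderOf (τ : ZMod (p ^ (k + 1))) ∣ d * p := h ▸ hmdp
    have := (pow_cast_eq_one_iff' (p ^ (k + 1)) τ (d * p)).1
      (orderOf_dvd_iff_pow_eq_one.1 hMdp)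
    push_cast at this; exact this
  -- LTE contradiction
  have hpI : Prime (p : ℤ) := Nat.prime_iff_prime_int.1 hp
  have hxy : (p : ℤ) ∣ τ ^ d - 1 := dvd_trans (dvd_pow_self _ (by omega)) hd1
  have hx : ¬ (p : ℤ) ∣ τ ^ d := fun hdvd => hτ (hpI.dvd_of_dvd_pow hdvd)
  have hmul := Int.emultiplicity_pow_sub_pow hp (hp.odd_of_ne_two hodd) hxy hx p
  rw [one_pow, ← pow_mul] at hmul
  have hm1 : emultiplicity (p : ℤ) (τ ^ d - 1) = (k - 1 : ℕ) :=
    emultiplicity_eq_of_dvd_of_not_dvd hd1 (by rwa [show k - 1 + 1 = k by omega])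
  have hm2 : emultiplicity p p = 1 := Nat.Prime.emultiplicity_self hp
  rw [hm1, hm2] at hmul
  have : ¬ (p : ℤ) ^ (k + 1) ∣ τ ^ (d * p) - 1 := by
    apply not_pow_dvd_of_emultiplicity_lt
    rw [hmul]
    rw [show ((k - 1 : ℕ) : ℕ∞) + 1 = ((k : ℕ) : ℕ∞) by
      exact_mod_cast congrArg (Nat.cast : ℕ → ℕ∞) (show (k - 1) + 1 = k by omega)]
    exact_mod_cast Nat.lt_succ_self k
  exact this hbig
end

section
/- Let p be an odd prime, K a field of characteristic p, f(X) = X³ + a₂X² + a₄X + a₆ ∈ K[X], and let H be the coefficient of X^{p−1} in f(X)^{(p−1)/2}. Suppose c ∈ K is a nonzero element with c^{p−1} = H, and set u = c^{−2} and f_u(X) = X³ + a₂uX² + a₄u²X + a₆u³. Then the coefficient of X^{p−1} in f_u(X)^{(p−1)/2} equals 1; that is, the twisted curve y² = f_u(x) has Hasse invariant 1. -/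
open Polynomial

lemma scaleRoots_pow_aux {R : Type*} [CommRing R] [NoZeroDivisors R]
    (f : R[X]) (u : R) (n : ℕ) :
    (f ^ n).scaleRoots u = (f.scaleRoots u) ^ n := by
  induction n with
  | zero => simpa using Polynomial.one_scaleRoots u
  | succ n ih =>
      rw [pow_succ, Polynomial.mul_scaleRoots_of_noZeroDivisors, ih, pow_succ]

lemma cubic_coeff_aux {K : Type*} [Field K] (A B D : K) :
    (X ^ 3 + C A * X ^ 2 + C B * X + C D : K[X]).coeff 0 = D ∧
    (X ^ 3 + C A * X ^ 2 + C B * X + C D : K[X]).coeff 1 = B ∧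
    (X ^ 3 + C A * X ^ 2 + C B * X + C D : K[X]).coeff 2 = A ∧
    (X ^ 3 + C A * X ^ 2 + C B * X + C D : K[X]).coeff 3 = 1 ∧
    ∀ i, (X ^ 3 + C A * X ^ 2 + C B * X + C D : K[X]).coeff (i + 4) = 0 := by
  refine ⟨by simp [coeff_X_pow], by simp [coeff_X_pow], by simp [coeff_X_pow],
    by simp [coeff_X_pow], fun i => by simp [coeff_X_pow]⟩

/-- Let `p` be an odd prime, `K` a field of characteristic `p`, `f = X³ + a₂X² + a₄X + a₆` with
Hasse invariant `H` (the coefficient of `X^(p-1)` in `f^((p-1)/2)`). If `c ∈ K` is nonzero with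
`c^(p-1) = H`, and `u = c⁻²`, then the twisted cubic `f_u = X³ + a₂uX² + a₄u²X + a₆u³` has Hasse
invariant `1`. -/
theorem hasseInvariant_twist_eq_one (p : ℕ) (hp : p.Prime) (hodd : p ≠ 2)
    (K : Type*) [Field K] [CharP K p] (a₂ a₄ a₆ : K) (H : K)
    (hH : H = ((X ^ 3 + C a₂ * X ^ 2 + C a₄ * X + C a₆) ^ ((p - 1) / 2)).coeff (p - 1))
    (c : K) (hc : c ≠ 0) (hcH : c ^ (p - 1) = H) (u : K) (hu : u = c⁻¹ ^ 2) :
    ((X ^ 3 + C (a₂ * u) * X ^ 2 + C (a₄ * u ^ 2) * X + C (a₆ * u ^ 3)) ^ ((p - 1) / 2)).coeff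
        (p - 1) = 1 := by
  set f : K[X] := X ^ 3 + C a₂ * X ^ 2 + C a₄ * X + C a₆ with hf
  have hmono : f.Monic := by unfold f; monicity!
  have hdeg : f.natDegree = 3 := by unfold f; compute_degree!
  set g : K[X] := X ^ 3 + C (a₂ * u) * X ^ 2 + C (a₄ * u ^ 2) * X + C (a₆ * u ^ 3) with hg
  obtain ⟨hf0, hf1, hf2, hf3, hfh⟩ := cubic_coeff_aux a₂ a₄ a₆
  obtain ⟨hg0, hg1, hg2, hg3, hgh⟩ := cubic_coeff_aux (a₂ * u) (a₄ * u ^ 2) (a₆ * u ^ 3)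
  rw [← hf] at hf0 hf1 hf2 hf3 hfh
  rw [← hg] at hg0 hg1 hg2 hg3 hgh
  have hfu : g = f.scaleRoots u := by
    ext i
    rw [coeff_scaleRoots, hdeg]
    rcases i with _ | _ | _ | _ | i
    · rw [hg0, hf0] <;> ring
    · rw [show (0:ℕ)+1 = 1 from rfl, hg1, hf1] <;> ring
    · rw [show (0:ℕ)+1+1 = 2 from rfl, hg2, hf2] <;> ring
    · rw [show (0:ℕ)+1+1+1 = 3 from rfl, hg3, hf3] <;> ring
    · rw [show i+1+1+1+1 = i+4 from rfl, hgh, hfh] <;> ring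
  have hodd' : p % 2 = 1 := Nat.odd_iff.mp (hp.odd_of_ne_two hodd)
  have hpow : ((p - 1) / 2) * 3 - (p - 1) = (p - 1) / 2 := by omega
  have h2m : 2 * ((p - 1) / 2) = p - 1 := by omega
  have hHne : H ≠ 0 := by
    rw [← hcH]
    exact pow_ne_zero _ hc
  rw [hfu, ← scaleRoots_pow_aux, coeff_scaleRoots, hmono.natDegree_pow, hdeg, hpow, ← hH, hu,
    ← pow_mul, h2m, inv_pow, hcH]
  exact mul_inv_cancel₀ hHne
end

section
/- Let K be a field of characteristic different from 2, let g, h ∈ K[X], and let x, y, X, Y, Z, s ∈ K satisfy y ≠ 0, s ≠ 0, Z ≠ 0, h(x) ≠ 0, and Z = −2y·h'(x)/h(x). Then the following two conditions are equivalent: (i) X = g(x)/h(x)² and Y = s·y·(g'(x)h(x) − 2g(x)h'(x))/h(x)³ (i.e. Y = s·y·(g/h²)'(x)); (ii) X·h(x)² − g(x) = 0 and the derivative of the polynomial X·h(T)² − g(T) − (Y/(sZ))·h(T)² (with X, Y, Z, s regarded as constants) vanishes at T = x. -/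
open Polynomial

/-- The algebraic identity underlying the resolution of Voloch's system by a single GCD
computation. Over a field `K` of characteristic `≠ 2`, with `g, h ∈ K[X]` and
`x, y, XX, YY, ZZ, s ∈ K` satisfying `y ≠ 0`, `s ≠ 0`, `ZZ ≠ 0`, `h(x) ≠ 0` and
`ZZ = -2y·h'(x)/h(x)`, the conditions
(i)  `XX = g(x)/h(x)²` and `YY = s·y·(g'(x)h(x) - 2g(x)h'(x))/h(x)³`
and
(ii) `XX·h(x)² - g(x) = 0` and `(XX·h(T)² - g(T) - (YY/(s·ZZ))·h(T)²)'` vanishes at `T = x`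
are equivalent. -/
theorem voloch_system_iff_gcd_system (K : Type*) [Field K] (hchar : (2 : K) ≠ 0)
    (g h : K[X]) (x y XX YY ZZ s : K)
    (hy : y ≠ 0) (hs : s ≠ 0) (hZ : ZZ ≠ 0) (hhx : h.eval x ≠ 0)
    (hZdef : ZZ = -2 * y * (derivative h).eval x / h.eval x) :
    (XX = g.eval x / (h.eval x) ^ 2 ∧
        YY = s * y * ((derivative g).eval x * h.eval x -
          2 * g.eval x * (derivative h).eval x) / (h.eval x) ^ 3) ↔
      (XX * (h.eval x) ^ 2 - g.eval x = 0 ∧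
        (derivative (C XX * h ^ 2 - g - C (YY / (s * ZZ)) * h ^ 2)).eval x = 0) := by
  have hn2 : (-2 : K) ≠ 0 := by
    simpa using hchar
  have hdx : (derivative h).eval x ≠ 0 := by
    intro h0
    apply hZ
    rw [hZdef, h0]; ring
  have hder : (derivative (C XX * h ^ 2 - g - C (YY / (s * ZZ)) * h ^ 2)).eval x =
      XX * (2 * h.eval x * (derivative h).eval x) - (derivative g).eval x -
        (YY / (s * ZZ)) * (2 * h.eval x * (derivative h).eval x) := by
    simp only [derivative_sub, derivative_mul, derivative_pow, derivative_C, eval_sub,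
      eval_mul, eval_add, eval_pow, eval_C, zero_mul, zero_add]
    ring
  rw [hder]
  have hD : YY / (s * ZZ) =
      YY * h.eval x / (-2 * s * y * (derivative h).eval x) := by
    rw [hZdef, show s * (-2 * y * (derivative h).eval x / h.eval x) =
      (-2 * s * y * (derivative h).eval x) / h.eval x from by ring, div_div_eq_mul_div]
  rw [hD]
  subst hZdef
  have hden : -2 * s * y * (derivative h).eval x ≠ 0 := by
    simp [hs, hy, hdx, hchar]
  constructor
  · rintro ⟨h1, h2⟩
    subst h1; subst h2
    refine ⟨by field_simp; ring, ?_⟩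
    rw [sub_eq_zero, div_mul_eq_mul_div, div_mul_eq_mul_div, eq_div_iff hden, sub_mul]
    field_simp
    ring
  · rintro ⟨h1, h2⟩
    have hX : XX = g.eval x / (h.eval x) ^ 2 := by
      rw [eq_div_iff (pow_ne_zero 2 hhx)]
      linear_combination h1
    refine ⟨hX, ?_⟩
    rw [eq_div_iff (pow_ne_zero 3 hhx)]
    have hb2 : (2 : K) * (derivative h).eval x ≠ 0 := mul_ne_zero hchar hdx
    apply mul_right_cancel₀ hb2
    field_simp at h2
    linear_combination (2 * h.eval x * (derivative h).eval x) * h2 +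
      (-4 * s * y * ((derivative h).eval x) ^ 2) * h1
end
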